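/- arXiv:1201.0533 — 2 statements merged into one kernel-verified Lean document; each statement's English description precedes it below -/
import Mathlib

section
/- Let {U_k}_{k≥1} be i.i.d. bounded real-valued random variables in L² whose distribution is symmetric around their mean, with |U_1 − E[U_1]| ≤ d almost surely for some d > 0 and Var(U_1) ≤ γd² for some γ ∈ (0,1]. Let S_n = Σ_{k=1}^n U_k. Then for every α ≥ 0 with δ = α/d ∈ [0,1) and every n ≥ 1, P( max_{1≤k≤n} |S_k − k·E[U_1]| ≥ αn ) ≤ 2 exp(−n E(γ,δ)). -/
open MeasureTheory ProbabilityTheory Filter Set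
open scoped NNReal ENNReal

/-- The exponent `E(γ, δ)` from the paper: `E(γ,δ) = δ x − ln(1 + γ(cosh x − 1))` where
`x = ln( (δ(1−γ) + √(δ²(1−γ)² + γ²(1−δ²))) / (γ(1−δ)) )`. -/
noncomputable def Eexp (γ δ : ℝ) : ℝ :=
  δ * Real.log ((δ * (1 - γ) + Real.sqrt (δ ^ 2 * (1 - γ) ^ 2 + γ ^ 2 * (1 - δ ^ 2)))
      / (γ * (1 - δ)))
    - Real.log (1 + γ *
        (Real.cosh (Real.log ((δ * (1 - γ)
            + Real.sqrt (δ ^ 2 * (1 - γ) ^ 2 + γ ^ 2 * (1 - δ ^ 2))) / (γ * (1 - δ)))) - 1))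

lemma convexOn_sinh' : ConvexOn ℝ (Set.Ici (0:ℝ)) Real.sinh := by
  refine convexOn_of_deriv2_nonneg' (convex_Ici 0) Real.differentiable_sinh.differentiableOn ?_ ?_
  · rw [Real.deriv_sinh]; exact Real.differentiable_cosh.differentiableOn
  · intro x hx
    simp only [Function.iterate_succ, Function.iterate_zero, Function.comp_apply, id_eq,
      Real.deriv_sinh, Real.deriv_cosh]
    exact Real.sinh_nonneg_iff.2 hx

lemma sinh_mul_le {a u : ℝ} (ha0 : 0 ≤ a) (ha1 : a ≤ 1) (hu : 0 ≤ u) :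
    Real.sinh (a * u) ≤ a * Real.sinh u := by
  have := convexOn_sinh'.2 (Set.mem_Ici.2 hu) (Set.mem_Ici.2 le_rfl) ha0 (by linarith)
    (by ring : a + (1 - a) = 1)
  simpa [Real.sinh_zero, smul_eq_mul] using this

lemma cosh_eq_one_add (y : ℝ) : Real.cosh y = 1 + 2 * Real.sinh (y / 2) ^ 2 := by
  have := Real.cosh_two_mul (y / 2)
  have h2 : 2 * (y / 2) = y := by ring
  rw [h2] at this
  rw [this, Real.cosh_sq]; ring

lemma cosh_interp {s t : ℝ} (hs : |s| ≤ 1) :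
    Real.cosh (s * t) ≤ 1 + s ^ 2 * (Real.cosh t - 1) := by
  have key : ∀ t' : ℝ, 0 ≤ t' → Real.cosh (s * t') ≤ 1 + s ^ 2 * (Real.cosh t' - 1) := by
    intro t' ht'
    have h1 : |Real.sinh (s * t' / 2)| = Real.sinh (|s| * (t' / 2)) := by
      rw [Real.abs_sinh]
      congr 1
      rw [abs_div, abs_mul, abs_of_nonneg ht', abs_of_nonneg (by norm_num : (0:ℝ) ≤ 2)]
      ring
    have h2 : Real.sinh (|s| * (t' / 2)) ≤ |s| * Real.sinh (t' / 2) :=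
      sinh_mul_le (abs_nonneg s) hs (by linarith)
    have h3 : Real.sinh (s * t' / 2) ^ 2 ≤ s ^ 2 * Real.sinh (t' / 2) ^ 2 := by
      have h4 : |Real.sinh (s * t' / 2)| ≤ |s| * Real.sinh (t' / 2) := h1 ▸ h2
      have h5 : 0 ≤ Real.sinh (t' / 2) := Real.sinh_nonneg_iff.2 (by linarith)
      calc Real.sinh (s * t' / 2) ^ 2 = |Real.sinh (s * t' / 2)| ^ 2 := (sq_abs _).symm
        _ ≤ (|s| * Real.sinh (t' / 2)) ^ 2 := by
            apply pow_le_pow_left₀ (abs_nonneg _) h4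
        _ = s ^ 2 * Real.sinh (t' / 2) ^ 2 := by rw [mul_pow, sq_abs]
    rw [cosh_eq_one_add (s * t'), cosh_eq_one_add t']
    nlinarith
  rcases le_or_gt 0 t with ht | ht
  · exact key t ht
  · have := key (-t) (by linarith)
    rw [show s * -t = -(s * t) by ring, Real.cosh_neg] at this
    rw [show Real.cosh t = Real.cosh (-t) from (Real.cosh_neg t).symm]
    exact this

lemma doob_chernoff {Ω : Type*} {m0 : MeasurableSpace Ω} {μ : Measure Ω} [IsProbabilityMeasure μ]
    {X : ℕ → Ω → ℝ} (hmeas : ∀ i, Measurable (X i))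
    (hindep : iIndepFun X μ)
    {B M : ℝ}
    (hbdd : ∀ i, 1 ≤ i → ∀ᵐ ω ∂μ, X i ω ≤ B)
    (hmean_le : ∀ i, 1 ≤ i → ∫ ω, Real.exp (X i ω) ∂μ ≤ M)
    (hmean_ge : ∀ i, 1 ≤ i → 1 ≤ ∫ ω, Real.exp (X i ω) ∂μ)
    (a : ℝ) (n : ℕ) :
    μ {ω | ∃ k, 1 ≤ k ∧ k ≤ n ∧ a ≤ ∑ i ∈ Finset.Icc 1 k, X i ω}
      ≤ ENNReal.ofReal (Real.exp (-a) * M ^ n) := by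
  classical
  set f : ℕ → Ω → ℝ := fun k ω => Real.exp (∑ i ∈ Finset.Icc 1 k, X i ω) with hfdef
  have hsm : ∀ i, StronglyMeasurable (X i) := fun i => (hmeas i).stronglyMeasurable
  set ℱ := Filtration.natural X hsm with hℱdef
  -- a.e. bound on all X i simultaneously
  have hb : ∀ᵐ ω ∂μ, ∀ i, 1 ≤ i → X i ω ≤ B := by
    rw [ae_all_iff]
    intro i
    rcases Nat.lt_or_ge i 1 with h | h
    · exact Eventually.of_forall fun ω hi => absurd hi (by omega)
    · exact (hbdd i h).mono fun ω h' _ => h'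
  -- integrability of f k
  have hint : ∀ k, Integrable (f k) μ := by
    intro k
    have hmf : Measurable (f k) := (Finset.measurable_sum _ fun i _ => hmeas i).exp
    refine Integrable.mono' (integrable_const (Real.exp (B * k))) hmf.aestronglyMeasurable ?_
    filter_upwards [hb] with ω hω
    rw [Real.norm_eq_abs, abs_of_nonneg (Real.exp_pos _).le]
    apply Real.exp_le_exp.2
    calc ∑ i ∈ Finset.Icc 1 k, X i ω ≤ ∑ _i ∈ Finset.Icc 1 k, B :=
          Finset.sum_le_sum fun i hi => hω i (Finset.mem_Icc.1 hi).1
      _ = B * k := by rw [Finset.sum_const, Nat.card_Icc]; simp [mul_comm]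
  -- adaptedness
  have hadp : StronglyAdapted ℱ f := by
    intro k
    have : Measurable[ℱ k] fun ω => ∑ i ∈ Finset.Icc 1 k, X i ω := by
      refine Finset.measurable_sum _ fun i hi => ?_
      have h1 : StronglyMeasurable[ℱ i] (X i) := Filtration.stronglyAdapted_natural hsm i
      exact h1.measurable.mono (ℱ.mono (Finset.mem_Icc.1 hi).2) le_rfl
    exact (Real.measurable_exp.comp this).stronglyMeasurable
  -- integrability of the per-step factors
  have hWint : ∀ i, 1 ≤ i → Integrable (fun ω => Real.exp (X i ω)) μ := by
    intro i hi
    refine Integrable.mono' (integrable_const (Real.exp B))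
      ((hmeas i).exp).aestronglyMeasurable ?_
    filter_upwards [hbdd i hi] with ω hω
    rw [Real.norm_eq_abs, abs_of_nonneg (Real.exp_pos _).le]
    exact Real.exp_le_exp.2 hω
  -- submartingale
  have hsub : Submartingale f ℱ μ := by
    refine submartingale_nat hadp hint fun i => ?_
    have hsplit : f (i + 1) = f i * fun ω => Real.exp (X (i + 1) ω) := by
      funext ω
      simp only [hfdef, Pi.mul_apply]
      rw [Finset.sum_Icc_succ_top (by omega : 1 ≤ i + 1), Real.exp_add]
    have hfi_sm : StronglyMeasurable[ℱ i] (f i) := hadp i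
    have hce : μ[f (i + 1)|ℱ i] =ᵐ[μ] f i * μ[(fun ω => Real.exp (X (i + 1) ω))|ℱ i] := by
      rw [hsplit]
      exact condExp_mul_of_stronglyMeasurable_left hfi_sm (hsplit ▸ hint (i + 1))
        (hWint (i + 1) (by omega))
    have hindep' : Indep (MeasurableSpace.comap (X (i + 1)) inferInstance) (ℱ i) μ :=
      hindep.indep_comap_natural_of_lt hsm (Nat.lt_succ_self i)
    have hci : μ[(fun ω => Real.exp (X (i + 1) ω))|ℱ i]
        =ᵐ[μ] fun _ => ∫ ω, Real.exp (X (i + 1) ω) ∂μ := by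
      refine condExp_indep_eq ((hmeas (i + 1)).comap_le) (ℱ.le i) ?_ hindep'
      exact Real.continuous_exp.comp_stronglyMeasurable
        (comap_measurable (X (i + 1))).stronglyMeasurable
    have hC : 1 ≤ ∫ ω, Real.exp (X (i + 1) ω) ∂μ := hmean_ge (i + 1) (by omega)
    calc f i = f i * fun _ => (1 : ℝ) := by funext ω; simp
      _ ≤ᵐ[μ] f i * μ[(fun ω => Real.exp (X (i + 1) ω))|ℱ i] := by
          filter_upwards [hci] with ω hω
          simp only [Pi.mul_apply, hω]
          exact mul_le_mul_of_nonneg_left hC (Real.exp_pos _).le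
      _ =ᵐ[μ] μ[f (i + 1)|ℱ i] := hce.symm
  -- bound on the terminal integral
  have hfn : ∫ ω, f n ω ∂μ ≤ M ^ n := by
    have h3 : ∫ ω, f n ω ∂μ = ∏ i ∈ Finset.Icc 1 n, ∫ ω, Real.exp (X i ω) ∂μ := by
      have hmg := hindep.mgf_sum hmeas (Finset.Icc 1 n) (t := 1)
      simp only [mgf, one_mul, Finset.sum_apply] at hmg
      exact hmg
    rw [h3]
    calc ∏ i ∈ Finset.Icc 1 n, ∫ ω, Real.exp (X i ω) ∂μ ≤ ∏ _i ∈ Finset.Icc 1 n, M :=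
          Finset.prod_le_prod
            (fun i hi => le_trans zero_le_one (hmean_ge i (Finset.mem_Icc.1 hi).1))
            (fun i hi => hmean_le i (Finset.mem_Icc.1 hi).1)
      _ = M ^ n := by rw [Finset.prod_const, Nat.card_Icc]; norm_num
  -- Doob's maximal inequality
  set ε : ℝ≥0 := (Real.exp a).toNNReal with hεdef
  have hεc : (ε : ℝ) = Real.exp a := Real.coe_toNNReal _ (Real.exp_pos a).le
  set A := {ω | (ε : ℝ) ≤ (Finset.range (n + 1)).sup' Finset.nonempty_range_add_one
      fun k => f k ω} with hAdef
  have hsubset : {ω | ∃ k, 1 ≤ k ∧ k ≤ n ∧ a ≤ ∑ i ∈ Finset.Icc 1 k, X i ω} ⊆ A := by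
    rintro ω ⟨k, hk1, hkn, hka⟩
    show (ε : ℝ) ≤ _
    rw [hεc]
    calc Real.exp a ≤ f k ω := Real.exp_le_exp.2 hka
      _ ≤ _ := Finset.le_sup' (fun k => f k ω) (Finset.mem_range.2 (by omega))
  have hmax := maximal_ineq hsub (fun k ω => (Real.exp_pos _).le) (ε := ε) n
  have h4 : (ε : ℝ≥0∞) * μ A ≤ ENNReal.ofReal (M ^ n) := by
    rw [← smul_eq_mul, ← ENNReal.smul_def]
    refine hmax.trans ?_
    refine ENNReal.ofReal_le_ofReal (le_trans ?_ hfn)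
    exact setIntegral_le_integral (hint n) (Eventually.of_forall fun ω => (Real.exp_pos _).le)
  have h5 : μ A ≤ ENNReal.ofReal (M ^ n) / (ε : ℝ≥0∞) := by
    refine (ENNReal.le_div_iff_mul_le (Or.inl ?_) (Or.inl ENNReal.coe_ne_top)).2 ?_
    · simp only [ne_eq, ENNReal.coe_eq_zero, hεdef, Real.toNNReal_eq_zero, not_le]
      exact Real.exp_pos a
    · rwa [mul_comm]
  refine (measure_mono hsubset).trans (h5.trans ?_)
  have hcoe : (ε : ℝ≥0∞) = ENNReal.ofReal (Real.exp a) := rfl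
  rw [hcoe, ← ENNReal.ofReal_div_of_pos (Real.exp_pos a)]
  apply ENNReal.ofReal_le_ofReal
  rw [div_eq_mul_inv, ← Real.exp_neg, mul_comm]

lemma moment_bound {Ω : Type*} {m0 : MeasurableSpace Ω} {μ : Measure Ω} [IsProbabilityMeasure μ]
    {V : Ω → ℝ} (hV : Measurable V)
    {d γ : ℝ} (hd : 0 < d) (hγ0 : 0 < γ)
    (hbdd : ∀ᵐ ω ∂μ, |V ω| ≤ d)
    (hsym : Measure.map V μ = Measure.map (fun ω => -(V ω)) μ)
    (hvar : ∫ ω, V ω ^ 2 ∂μ ≤ γ * d ^ 2) (c : ℝ) :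
    ∫ ω, Real.exp (c * V ω) ∂μ ≤ 1 + γ * (Real.cosh (c * d) - 1) := by
  have hbd2 : ∀ᵐ ω ∂μ, |c * V ω| ≤ |c * d| := by
    filter_upwards [hbdd] with ω hω
    rw [abs_mul, abs_mul, abs_of_nonneg hd.le]
    exact mul_le_mul_of_nonneg_left hω (abs_nonneg c)
  -- integrability facts
  have hicosh : Integrable (fun ω => Real.cosh (c * V ω)) μ := by
    refine Integrable.mono' (integrable_const (Real.cosh (c * d)))
      (Real.measurable_cosh.comp ((hV.const_mul c))).aestronglyMeasurable ?_
    filter_upwards [hbd2] with ω hω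
    rw [Real.norm_eq_abs, abs_of_nonneg (Real.cosh_pos _).le]
    calc Real.cosh (c * V ω) ≤ Real.cosh (|c * d|) := by
          rw [Real.cosh_le_cosh]; rwa [abs_abs]
      _ = Real.cosh (c * d) := Real.cosh_abs _
  have hisinh : Integrable (fun ω => Real.sinh (c * V ω)) μ := by
    refine Integrable.mono' (integrable_const (Real.sinh |c * d|))
      (Real.measurable_sinh.comp ((hV.const_mul c))).aestronglyMeasurable ?_
    filter_upwards [hbd2] with ω hω
    rw [Real.norm_eq_abs, Real.abs_sinh]
    exact Real.sinh_le_sinh.2 hω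
  -- the sinh part vanishes by symmetry
  have hsinh0 : ∫ ω, Real.sinh (c * V ω) ∂μ = 0 := by
    have hmeas' : AEStronglyMeasurable (fun y => Real.sinh (c * y)) (Measure.map V μ) :=
      (Real.measurable_sinh.comp (measurable_const_mul c)).aestronglyMeasurable
    have h1 : ∫ ω, Real.sinh (c * V ω) ∂μ = ∫ y, Real.sinh (c * y) ∂(Measure.map V μ) :=
      (integral_map hV.aemeasurable hmeas').symm
    have h2 : ∫ y, Real.sinh (c * y) ∂(Measure.map (fun ω => -(V ω)) μ)
        = ∫ ω, Real.sinh (c * -(V ω)) ∂μ :=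
      integral_map hV.neg.aemeasurable (hsym ▸ hmeas')
    have h3 : ∫ ω, Real.sinh (c * -(V ω)) ∂μ = -∫ ω, Real.sinh (c * V ω) ∂μ := by
      rw [← integral_neg]
      congr 1
      funext ω
      rw [mul_neg, Real.sinh_neg]
    have : ∫ ω, Real.sinh (c * V ω) ∂μ = -∫ ω, Real.sinh (c * V ω) ∂μ := by
      nth_rewrite 1 [h1]
      rw [hsym, h2, h3]
    linarith
  -- exp = cosh + sinh
  have hexp_eq : ∫ ω, Real.exp (c * V ω) ∂μ
      = ∫ ω, Real.cosh (c * V ω) ∂μ + ∫ ω, Real.sinh (c * V ω) ∂μ := by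
    rw [← integral_add hicosh hisinh]
    congr 1
    funext ω
    rw [Real.cosh_add_sinh]
  rw [hexp_eq, hsinh0, add_zero]
  -- bound the cosh integral
  set K := (Real.cosh (c * d) - 1) / d ^ 2 with hKdef
  have hK0 : 0 ≤ K := div_nonneg (by linarith [Real.one_le_cosh (c * d)]) (by positivity)
  have hiV2 : Integrable (fun ω => V ω ^ 2) μ := by
    refine Integrable.mono' (integrable_const (d ^ 2)) (hV.pow_const 2).aestronglyMeasurable ?_
    filter_upwards [hbdd] with ω hω
    rw [Real.norm_eq_abs, abs_of_nonneg (sq_nonneg _)]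
    calc V ω ^ 2 = |V ω| ^ 2 := (sq_abs _).symm
      _ ≤ d ^ 2 := pow_le_pow_left₀ (abs_nonneg _) hω 2
  have hpt : ∀ᵐ ω ∂μ, Real.cosh (c * V ω) ≤ 1 + V ω ^ 2 * K := by
    filter_upwards [hbdd] with ω hω
    have hs : |V ω / d| ≤ 1 := by
      rw [abs_div, abs_of_nonneg hd.le]
      exact (div_le_one hd).2 hω
    have := cosh_interp (t := c * d) hs
    have harg : V ω / d * (c * d) = c * V ω := by field_simp
    rw [harg] at this
    refine this.trans (le_of_eq ?_)
    rw [hKdef]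
    field_simp
    try ring
  calc ∫ ω, Real.cosh (c * V ω) ∂μ ≤ ∫ ω, (1 + V ω ^ 2 * K) ∂μ :=
        integral_mono_ae hicosh ((integrable_const 1).add (hiV2.mul_const K)) hpt
    _ = 1 + (∫ ω, V ω ^ 2 ∂μ) * K := by
        rw [integral_add (integrable_const 1) (hiV2.mul_const K), integral_const,
          integral_mul_const]
        simp
    _ ≤ 1 + γ * d ^ 2 * K := by
        have := mul_le_mul_of_nonneg_right hvar hK0
        linarith
    _ = 1 + γ * (Real.cosh (c * d) - 1) := by
        rw [hKdef]
        field_simp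

lemma moment_lower {Ω : Type*} {m0 : MeasurableSpace Ω} {μ : Measure Ω} [IsProbabilityMeasure μ]
    {V : Ω → ℝ} (hV : Measurable V) {d : ℝ}
    (hbdd : ∀ᵐ ω ∂μ, |V ω| ≤ d)
    (hVint : Integrable V μ) (hV0 : ∫ ω, V ω ∂μ = 0) (c : ℝ) :
    1 ≤ ∫ ω, Real.exp (c * V ω) ∂μ := by
  have hiexp : Integrable (fun ω => Real.exp (c * V ω)) μ := by
    refine Integrable.mono' (integrable_const (Real.exp (|c| * d)))
      ((hV.const_mul c).exp).aestronglyMeasurable ?_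
    filter_upwards [hbdd] with ω hω
    rw [Real.norm_eq_abs, abs_of_nonneg (Real.exp_pos _).le]
    apply Real.exp_le_exp.2
    calc c * V ω ≤ |c * V ω| := le_abs_self _
      _ = |c| * |V ω| := abs_mul _ _
      _ ≤ |c| * d := mul_le_mul_of_nonneg_left hω (abs_nonneg c)
  have hpt : ∀ᵐ ω ∂μ, c * V ω + 1 ≤ Real.exp (c * V ω) :=
    Eventually.of_forall fun ω => Real.add_one_le_exp _
  calc (1 : ℝ) = ∫ ω, (c * V ω + 1) ∂μ := by
        rw [integral_add ((hVint.const_mul c)) (integrable_const 1), integral_const]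
        simp [integral_const_mul, hV0]
    _ ≤ ∫ ω, Real.exp (c * V ω) ∂μ :=
        integral_mono_ae ((hVint.const_mul c).add (integrable_const 1)) hiexp hpt

/-- Corollary 1: tail bound for partial sums of i.i.d. bounded random variables whose
distribution is symmetric around their mean. -/
theorem iid_symmetric_bounded_sum_tail_bound
    {Ω : Type*} {m0 : MeasurableSpace Ω} {μ : Measure Ω} [IsProbabilityMeasure μ]
    {U : ℕ → Ω → ℝ}
    (hmeas : ∀ i, Measurable (U i))
    (hL2 : MemLp (U 1) 2 μ)
    (hindep : iIndepFun U μ)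
    (hident : ∀ i, 1 ≤ i → IdentDistrib (U i) (U 1) μ μ)
    (hsymm : Measure.map (fun ω => U 1 ω - ∫ ω', U 1 ω' ∂μ) μ
      = Measure.map (fun ω => -(U 1 ω - ∫ ω', U 1 ω' ∂μ)) μ)
    {d γ : ℝ} (hd : 0 < d) (hγ : γ ∈ Set.Ioc (0 : ℝ) 1)
    (hbdd : ∀ᵐ ω ∂μ, |U 1 ω - ∫ ω', U 1 ω' ∂μ| ≤ d)
    (hvar : ∫ ω, (U 1 ω - ∫ ω', U 1 ω' ∂μ) ^ 2 ∂μ ≤ γ * d ^ 2)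
    {α : ℝ} (hα : 0 ≤ α) (hδ : α / d < 1) (n : ℕ) (hn : 1 ≤ n) :
    μ {ω | ∃ k, 1 ≤ k ∧ k ≤ n ∧
        α * n ≤ |(∑ i ∈ Finset.Icc 1 k, U i ω) - k * ∫ ω', U 1 ω' ∂μ|}
      ≤ ENNReal.ofReal (2 * Real.exp (-(n : ℝ) * Eexp γ (α / d))) := by
  obtain ⟨hγ0, hγ1⟩ := hγ
  set m : ℝ := ∫ ω', U 1 ω' ∂μ with hmdef
  set δ : ℝ := α / d with hδdef
  have hδ0 : 0 ≤ δ := div_nonneg hα hd.le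
  have hδ1 : δ < 1 := hδ
  set r : ℝ := (δ * (1 - γ) + Real.sqrt (δ ^ 2 * (1 - γ) ^ 2 + γ ^ 2 * (1 - δ ^ 2)))
      / (γ * (1 - δ)) with hrdef
  set x : ℝ := Real.log r with hxdef
  -- r ≥ 1 hence x ≥ 0
  have hdenpos : 0 < γ * (1 - δ) := by nlinarith
  have hr1 : 1 ≤ r := by
    rw [hrdef, le_div_iff₀ hdenpos, one_mul]
    have hA : (γ * (1 - δ)) ^ 2 ≤ δ ^ 2 * (1 - γ) ^ 2 + γ ^ 2 * (1 - δ ^ 2) := by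
      nlinarith [sq_nonneg (δ * (1 - γ)),
        mul_nonneg (mul_nonneg (sq_nonneg γ) hδ0) (by linarith : (0:ℝ) ≤ 1 - δ)]
    have h1 : γ * (1 - δ) = Real.sqrt ((γ * (1 - δ)) ^ 2) := (Real.sqrt_sq hdenpos.le).symm
    have h2 : Real.sqrt ((γ * (1 - δ)) ^ 2)
        ≤ Real.sqrt (δ ^ 2 * (1 - γ) ^ 2 + γ ^ 2 * (1 - δ ^ 2)) := Real.sqrt_le_sqrt hA
    nlinarith [h1, h2]
  have hx0 : 0 ≤ x := Real.log_nonneg hr1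
  set lam : ℝ := x / d with hlamdef
  have hlam0 : 0 ≤ lam := div_nonneg hx0 hd.le
  have hlamd : lam * d = x := div_mul_cancel₀ x hd.ne'
  set Mb : ℝ := 1 + γ * (Real.cosh x - 1) with hMbdef
  have hMb1 : 1 ≤ Mb := by
    have := Real.one_le_cosh x
    nlinarith
  have hEexp : Eexp γ δ = δ * x - Real.log Mb := rfl
  -- the centered variable
  set V : Ω → ℝ := fun ω => U 1 ω - m with hVdef
  have hVmeas : Measurable V := (hmeas 1).sub measurable_const
  have hU1int : Integrable (U 1) μ := hL2.integrable one_le_two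
  have hVint : Integrable V μ := hU1int.sub (integrable_const m)
  have hV0 : ∫ ω, V ω ∂μ = 0 := by
    rw [hVdef]
    rw [integral_sub hU1int (integrable_const m), integral_const]
    simp [hmdef]
  -- a.e. bounds for each i ≥ 1
  have hbd_i : ∀ i, 1 ≤ i → ∀ᵐ ω ∂μ, |U i ω - m| ≤ d := by
    intro i hi
    have hS : MeasurableSet {y : ℝ | ¬ |y - m| ≤ d} :=
      (measurableSet_le (measurable_id.sub measurable_const).abs measurable_const).compl
    rw [ae_iff]
    have h0 : μ {ω | ¬ |U 1 ω - m| ≤ d} = 0 := ae_iff.1 hbdd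
    calc μ {ω | ¬ |U i ω - m| ≤ d} = μ (U i ⁻¹' {y : ℝ | ¬ |y - m| ≤ d}) := rfl
      _ = Measure.map (U i) μ {y : ℝ | ¬ |y - m| ≤ d} := (Measure.map_apply (hmeas i) hS).symm
      _ = Measure.map (U 1) μ {y : ℝ | ¬ |y - m| ≤ d} := by rw [(hident i hi).map_eq]
      _ = μ (U 1 ⁻¹' {y : ℝ | ¬ |y - m| ≤ d}) := Measure.map_apply (hmeas 1) hS
      _ = 0 := h0
  -- the two exponent bounds
  have hmean_le : ∀ (c : ℝ), ∀ i, 1 ≤ i →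
      ∫ ω, Real.exp (c * (U i ω - m)) ∂μ = ∫ ω, Real.exp (c * V ω) ∂μ := by
    intro c i hi
    have hcomp : IdentDistrib (fun ω => Real.exp (c * (U i ω - m)))
        (fun ω => Real.exp (c * (U 1 ω - m))) μ μ :=
      (hident i hi).comp (Real.measurable_exp.comp ((measurable_id.sub measurable_const).const_mul c))
    exact hcomp.integral_eq
  -- engine application for a signed coefficient
  have key : ∀ c : ℝ, Real.cosh (c * d) = Real.cosh x →
      μ {ω | ∃ k, 1 ≤ k ∧ k ≤ n ∧ lam * (α * n) ≤ ∑ i ∈ Finset.Icc 1 k, c * (U i ω - m)}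
        ≤ ENNReal.ofReal (Real.exp (-(lam * (α * n))) * Mb ^ n) := by
    intro c hcosh
    refine doob_chernoff (X := fun i ω => c * (U i ω - m))
      (fun i => ((hmeas i).sub measurable_const).const_mul c) ?_ (B := |c| * d)
      ?_ (M := Mb) ?_ ?_ _ n
    · exact hindep.comp (g := fun _ => fun y : ℝ => c * (y - m))
        (fun i => (measurable_id.sub measurable_const).const_mul c)
    · intro i hi
      filter_upwards [hbd_i i hi] with ω hω
      calc c * (U i ω - m) ≤ |c * (U i ω - m)| := le_abs_self _
        _ = |c| * |U i ω - m| := abs_mul _ _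
        _ ≤ |c| * d := mul_le_mul_of_nonneg_left hω (abs_nonneg c)
    · intro i hi
      rw [hmean_le c i hi]
      calc ∫ ω, Real.exp (c * V ω) ∂μ ≤ 1 + γ * (Real.cosh (c * d) - 1) :=
            moment_bound hVmeas hd hγ0 hbdd hsymm hvar c
        _ = Mb := by rw [hcosh]
    · intro i hi
      rw [hmean_le c i hi]
      exact moment_lower hVmeas hbdd hVint hV0 c
  have hsum : ∀ k, ∀ ω : Ω, (∑ i ∈ Finset.Icc 1 k, U i ω) - (k : ℝ) * m
      = ∑ i ∈ Finset.Icc 1 k, (U i ω - m) := by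
    intro k ω
    rw [Finset.sum_sub_distrib, Finset.sum_const, Nat.card_Icc, nsmul_eq_mul]
    push_cast
    ring
  -- splitting into the two one-sided events
  set Tp := {ω | ∃ k, 1 ≤ k ∧ k ≤ n ∧
      lam * (α * n) ≤ ∑ i ∈ Finset.Icc 1 k, lam * (U i ω - m)} with hTpdef
  set Tm := {ω | ∃ k, 1 ≤ k ∧ k ≤ n ∧
      lam * (α * n) ≤ ∑ i ∈ Finset.Icc 1 k, (-lam) * (U i ω - m)} with hTmdef
  have hsubset : {ω | ∃ k, 1 ≤ k ∧ k ≤ n ∧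
      α * n ≤ |(∑ i ∈ Finset.Icc 1 k, U i ω) - k * m|} ⊆ Tp ∪ Tm := by
    rintro ω ⟨k, hk1, hkn, hka⟩
    rw [hsum k ω] at hka
    rcases le_abs.1 hka with h | h
    · left
      refine ⟨k, hk1, hkn, ?_⟩
      calc lam * (α * n) ≤ lam * ∑ i ∈ Finset.Icc 1 k, (U i ω - m) :=
            mul_le_mul_of_nonneg_left h hlam0
        _ = ∑ i ∈ Finset.Icc 1 k, lam * (U i ω - m) := Finset.mul_sum _ _ _
    · right
      refine ⟨k, hk1, hkn, ?_⟩
      calc lam * (α * n) ≤ lam * -∑ i ∈ Finset.Icc 1 k, (U i ω - m) :=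
            mul_le_mul_of_nonneg_left h hlam0
        _ = ∑ i ∈ Finset.Icc 1 k, (-lam) * (U i ω - m) := by
            rw [mul_neg, ← neg_mul, Finset.mul_sum]
  -- final computation
  have hfinal : Real.exp (-(lam * (α * n))) * Mb ^ n = Real.exp (-(n : ℝ) * Eexp γ δ) := by
    have hMbpos : (0 : ℝ) < Mb := lt_of_lt_of_le one_pos hMb1
    have h1 : Mb ^ n = Real.exp ((n : ℝ) * Real.log Mb) := by
      rw [Real.exp_nat_mul, Real.exp_log hMbpos]
    have ha : lam * (α * n) = (n : ℝ) * (δ * x) := by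
      rw [hlamdef, hδdef]
      field_simp
    rw [h1, ← Real.exp_add, hEexp, ha]
    congr 1
    ring
  calc μ {ω | ∃ k, 1 ≤ k ∧ k ≤ n ∧
        α * n ≤ |(∑ i ∈ Finset.Icc 1 k, U i ω) - k * m|} ≤ μ (Tp ∪ Tm) :=
        measure_mono hsubset
    _ ≤ μ Tp + μ Tm := measure_union_le _ _
    _ ≤ ENNReal.ofReal (Real.exp (-(lam * (α * n))) * Mb ^ n)
        + ENNReal.ofReal (Real.exp (-(lam * (α * n))) * Mb ^ n) :=
        add_le_add (key lam (by rw [hlamd])) (key (-lam) (by rw [neg_mul, Real.cosh_neg, hlamd]))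
    _ = ENNReal.ofReal (2 * Real.exp (-(n : ℝ) * Eexp γ δ)) := by
        rw [← ENNReal.ofReal_add (by positivity) (by positivity), hfinal]
        congr 1
        ring
end

section
/- Let {X_k, F_k}_{k≥0} be a discrete-time real-valued conditionally symmetric martingale, and let m be a positive even integer. Assume that almost surely, for every k ≥ 1, |X_k − X_{k−1}| ≤ d and E[(X_k − X_{k−1})^l | F_{k−1}] ≤ μ_l for every even l ∈ {2, 4, …, m}, for some d > 0 and nonnegative numbers μ_2, μ_4, …, μ_m. Set δ = α/d and γ_{2l} = μ_{2l}/d^{2l} for l = 1, …, m/2. Then for every α ≥ 0 and n ≥ 1, P( max_{1≤k≤n} |X_k − X_0| ≥ αn ) ≤ 2 [ min_{x≥0} e^{−δx} ( 1 + Σ_{l=1}^{m/2−1} (γ_{2l} − γ_m) x^{2l}/(2l)! + γ_m (cosh(x) − 1) ) ]^n. -/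
open MeasureTheory ProbabilityTheory Filter Set
open scoped ENNReal NNReal

lemma cosh_partial_le (x : ℝ) (M : ℕ) :
    ∑ l ∈ Finset.range M, x ^ (2*l) / (2*l).factorial ≤ Real.cosh x := by
  rw [Real.cosh_eq_tsum]
  exact Summable.sum_le_tsum (Finset.range M)
    (fun i _ => div_nonneg ((even_two_mul i).pow_nonneg x) (by positivity))
    (Real.hasSum_cosh x).summable

lemma cosh_pointwise_bound {d y t : ℝ} (hd : 0 < d) (hy : |y| ≤ d) (M : ℕ) :
    Real.cosh (t*y) ≤ ∑ l ∈ Finset.range M, (t*y) ^ (2*l) / (2*l).factorial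
      + y ^ (2*M) / d ^ (2*M) *
        (Real.cosh (t*d) - ∑ l ∈ Finset.range M, (t*d) ^ (2*l) / (2*l).factorial) := by
  have Sy := (Real.hasSum_cosh (t*y)).summable
  have Sd := (Real.hasSum_cosh (t*d)).summable
  have hy2 : y^2 ≤ d^2 := by
    nlinarith [abs_nonneg y, abs_le.mp hy, sq_abs y]
  have hterm : ∀ j : ℕ, (t*y) ^ (2*(j+M)) / (2*(j+M)).factorial
      ≤ y ^ (2*M) / d ^ (2*M) * ((t*d) ^ (2*(j+M)) / (2*(j+M)).factorial) := by
    intro j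
    have h1 : y^(2*(j+M)) * d^(2*M) ≤ y^(2*M) * d^(2*(j+M)) := by
      rw [show 2*(j+M) = 2*M + 2*j by ring, pow_add, pow_add]
      have hyj : y^(2*j) ≤ d^(2*j) := by
        rw [pow_mul, pow_mul]; exact pow_le_pow_left₀ (sq_nonneg y) hy2 j
      calc y ^ (2*M) * y^(2*j) * d^(2*M) = (y^(2*M) * d^(2*M)) * y^(2*j) := by ring
        _ ≤ (y^(2*M) * d^(2*M)) * d^(2*j) := by
            apply mul_le_mul_of_nonneg_left hyj
            exact mul_nonneg ((even_two_mul M).pow_nonneg y) (pow_pos hd (2*M)).le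
        _ = y ^ (2*M) * (d^(2*M) * d^(2*j)) := by ring
    have key : (t*y)^(2*(j+M)) * d^(2*M) ≤ y^(2*M) * (t*d)^(2*(j+M)) := by
      rw [mul_pow, mul_pow]
      calc t^(2*(j+M)) * y^(2*(j+M)) * d^(2*M)
          = (y^(2*(j+M)) * d^(2*M)) * t^(2*(j+M)) := by ring
        _ ≤ (y^(2*M) * d^(2*(j+M))) * t^(2*(j+M)) :=
            mul_le_mul_of_nonneg_right h1 ((even_two_mul _).pow_nonneg t)
        _ = y^(2*M) * (t^(2*(j+M)) * d^(2*(j+M))) := by ring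
    rw [div_mul_div_comm]
    rw [div_le_div_iff₀ (by positivity) (by positivity)]
    calc (t*y)^(2*(j+M)) * (d^(2*M) * ((2*(j+M)).factorial : ℝ))
        = ((t*y)^(2*(j+M)) * d^(2*M)) * ((2*(j+M)).factorial : ℝ) := by ring
      _ ≤ (y^(2*M) * (t*d)^(2*(j+M))) * ((2*(j+M)).factorial : ℝ) :=
          mul_le_mul_of_nonneg_right key (by positivity)
  have hty := Summable.sum_add_tsum_nat_add (f := fun l => (t*y) ^ (2*l) / ((2*l).factorial : ℝ)) M Sy
  have htd := Summable.sum_add_tsum_nat_add (f := fun l => (t*d) ^ (2*l) / ((2*l).factorial : ℝ)) M Sd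
  rw [Real.cosh_eq_tsum, ← hty, Real.cosh_eq_tsum, ← htd]
  have htsum : ∑' j, (t*y) ^ (2*(j+M)) / ((2*(j+M)).factorial : ℝ)
      ≤ y ^ (2*M) / d ^ (2*M) * ∑' j, (t*d) ^ (2*(j+M)) / ((2*(j+M)).factorial : ℝ) := by
    rw [← tsum_mul_left]
    exact Summable.tsum_le_tsum hterm ((summable_nat_add_iff M).2 Sy)
      (((summable_nat_add_iff M).2 Sd).mul_left _)
  have hc : 0 ≤ y ^ (2*M) / d ^ (2*M) :=
    div_nonneg ((even_two_mul M).pow_nonneg y) (by positivity)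
  nlinarith [htsum]

lemma range_eq_insert_Icc {M : ℕ} (hM : 1 ≤ M) :
    Finset.range M = insert 0 (Finset.Icc 1 (M-1)) := by
  ext x; simp [Finset.mem_range, Finset.mem_Icc, Finset.mem_insert]; omega

lemma onesided {Ω : Type*} {m0 : MeasurableSpace Ω} {μ : Measure Ω} [IsProbabilityMeasure μ]
    {F : Filtration ℕ m0} {X : ℕ → Ω → ℝ}
    (hmart : Martingale X F μ)
    (hsymm : ∀ k : ℕ, 1 ≤ k → ∀ g : ℝ → ℝ, Measurable g →
      μ[fun ω => g (X k ω - X (k - 1) ω) | F (k - 1)]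
        =ᵐ[μ] μ[fun ω => g (-(X k ω - X (k - 1) ω)) | F (k - 1)])
    {M : ℕ} (hM : 1 ≤ M)
    {d : ℝ} (hd : 0 < d) {μmom : ℕ → ℝ}
    (hμnonneg : ∀ l, 1 ≤ l → l ≤ M → 0 ≤ μmom (2 * l))
    (hbdd : ∀ k : ℕ, 1 ≤ k → ∀ᵐ ω ∂μ, |X k ω - X (k - 1) ω| ≤ d)
    (hmom : ∀ k : ℕ, 1 ≤ k → ∀ l, 1 ≤ l → l ≤ M → ∀ᵐ ω ∂μ,
      (μ[fun ω => (X k ω - X (k - 1) ω) ^ (2 * l) | F (k - 1)]) ω ≤ μmom (2 * l))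
    {α : ℝ} (hα : 0 ≤ α) (n : ℕ) {t : ℝ} (ht : 0 ≤ t) :
    μ {ω | ∃ k, 1 ≤ k ∧ k ≤ n ∧ α * n ≤ X k ω - X 0 ω}
      ≤ ENNReal.ofReal ((Real.exp (-(t*α)) *
          (1 + (∑ l ∈ Finset.Icc 1 (M-1), μmom (2*l) * t^(2*l) / ((2*l).factorial : ℝ))
            + (Real.cosh (t*d) - ∑ l ∈ Finset.range M, (t*d)^(2*l) / ((2*l).factorial : ℝ))
              * (μmom (2*M) / d^(2*M)))) ^ n) := by
  set B : ℝ := 1 + (∑ l ∈ Finset.Icc 1 (M-1), μmom (2*l) * t^(2*l) / ((2*l).factorial : ℝ))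
            + (Real.cosh (t*d) - ∑ l ∈ Finset.range M, (t*d)^(2*l) / ((2*l).factorial : ℝ))
              * (μmom (2*M) / d^(2*M)) with hBdef
  have hcoshd : 0 ≤ Real.cosh (t*d) - ∑ l ∈ Finset.range M, (t*d)^(2*l) / ((2*l).factorial : ℝ) :=
    sub_nonneg.2 (cosh_partial_le (t*d) M)
  have hB1 : 1 ≤ B := by
    have h1 : 0 ≤ ∑ l ∈ Finset.Icc 1 (M-1), μmom (2*l) * t^(2*l) / ((2*l).factorial : ℝ) := by
      apply Finset.sum_nonneg
      intro l hl
      rw [Finset.mem_Icc] at hl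
      have := hμnonneg l hl.1 (by omega)
      have := (even_two_mul l).pow_nonneg t
      positivity
    have h2 : 0 ≤ μmom (2*M) / d^(2*M) := div_nonneg (hμnonneg M hM le_rfl) (by positivity)
    rw [hBdef]; nlinarith [mul_nonneg hcoshd h2]
  have hXm : ∀ k, StronglyMeasurable (X k) := fun k => (hmart.stronglyAdapted k).mono (F.le k)
  have hbdd' : ∀ k : ℕ, ∀ᵐ ω ∂μ, |X (k+1) ω - X k ω| ≤ d := by
    intro k; simpa using hbdd (k+1) (by omega)
  have hIb : ∀ (f : Ω → ℝ), AEStronglyMeasurable f μ → ∀ (C : ℝ),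
      (∀ᵐ ω ∂μ, |f ω| ≤ C) → Integrable f μ := by
    intro f hf C h
    exact (integrable_const C).mono' hf (by simpa [Real.norm_eq_abs] using h)
  -- key conditional bounds
  have hkey : ∀ k : ℕ,
      (μ[fun ω => Real.exp (t*(X (k+1) ω - X k ω)) | F k] ≤ᵐ[μ] fun _ => B)
      ∧ ((fun _ => (1:ℝ)) ≤ᵐ[μ] μ[fun ω => Real.exp (t*(X (k+1) ω - X k ω)) | F k]) := by
    intro k
    have hξSM : StronglyMeasurable (fun ω => X (k+1) ω - X k ω) := (hXm _).sub (hXm _)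
    have hbd := hbdd' k
    have hint_exp : Integrable (fun ω => Real.exp (t*(X (k+1) ω - X k ω))) μ := by
      apply hIb _ (Real.continuous_exp.comp_stronglyMeasurable
        (hξSM.const_mul t)).aestronglyMeasurable (Real.exp (t*d))
      filter_upwards [hbd] with ω h
      rw [abs_of_pos (Real.exp_pos _)]
      apply Real.exp_le_exp.2
      calc t*(X (k+1) ω - X k ω) ≤ t * |X (k+1) ω - X k ω| :=
            mul_le_mul_of_nonneg_left (le_abs_self _) ht
        _ ≤ t * d := mul_le_mul_of_nonneg_left h ht
    have hint_nexp : Integrable (fun ω => Real.exp (t*(-(X (k+1) ω - X k ω)))) μ := by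
      apply hIb _ (Real.continuous_exp.comp_stronglyMeasurable
        (hξSM.neg.const_mul t)).aestronglyMeasurable (Real.exp (t*d))
      filter_upwards [hbd] with ω h
      rw [abs_of_pos (Real.exp_pos _)]
      apply Real.exp_le_exp.2
      calc t*(-(X (k+1) ω - X k ω)) ≤ t * |(-(X (k+1) ω - X k ω))| :=
            mul_le_mul_of_nonneg_left (le_abs_self _) ht
        _ ≤ t * d := mul_le_mul_of_nonneg_left (by rwa [abs_neg]) ht
    have hint_cosh : Integrable (fun ω => Real.cosh (t*(X (k+1) ω - X k ω))) μ := by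
      apply hIb _ (Real.continuous_cosh.comp_stronglyMeasurable
        (hξSM.const_mul t)).aestronglyMeasurable (Real.cosh (t*d))
      filter_upwards [hbd] with ω h
      rw [abs_of_pos (Real.cosh_pos _)]
      rw [Real.cosh_le_cosh]
      rw [abs_mul, abs_of_nonneg ht, abs_of_nonneg (mul_nonneg ht hd.le)]
      exact mul_le_mul_of_nonneg_left h ht
    have hsym : μ[fun ω => Real.exp (t*(X (k+1) ω - X k ω)) | F k]
        =ᵐ[μ] μ[fun ω => Real.exp (t*(-(X (k+1) ω - X k ω))) | F k] := by
      have := hsymm (k+1) (by omega) (fun y => Real.exp (t*y)) (by fun_prop)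
      simpa using this
    have hcosh_eq : μ[fun ω => Real.cosh (t*(X (k+1) ω - X k ω)) | F k]
        =ᵐ[μ] μ[fun ω => Real.exp (t*(X (k+1) ω - X k ω)) | F k] := by
      have hfun : (fun ω => Real.cosh (t*(X (k+1) ω - X k ω)))
          = (2⁻¹ : ℝ) • ((fun ω => Real.exp (t*(X (k+1) ω - X k ω)))
              + fun ω => Real.exp (t*(-(X (k+1) ω - X k ω)))) := by
        funext ω
        simp only [Real.cosh_eq, Pi.smul_apply, Pi.add_apply, smul_eq_mul, mul_neg, neg_mul]
        ring
      rw [hfun]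
      have h2 := condExp_smul (μ := μ) (m := F k) (2⁻¹ : ℝ)
        ((fun ω => Real.exp (t*(X (k+1) ω - X k ω)))
          + fun ω => Real.exp (t*(-(X (k+1) ω - X k ω))))
      have h3 := condExp_add (m := F k) hint_exp hint_nexp
      filter_upwards [h2, h3, hsym] with ω e2 e3 es
      rw [e2]
      simp only [Pi.smul_apply, e3, Pi.add_apply, smul_eq_mul]
      rw [← es]
      ring
    have hlow1 : (fun _ => (1:ℝ)) ≤ᵐ[μ] μ[fun ω => Real.cosh (t*(X (k+1) ω - X k ω)) | F k] := by
      have h := condExp_mono (m := F k) (integrable_const (1:ℝ)) hint_cosh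
        (ae_of_all _ fun ω => Real.one_le_cosh _)
      rwa [condExp_const (F.le k)] at h
    refine ⟨?_, hlow1.trans hcosh_eq.le⟩
    -- upper bound
    set φ : ℕ → Ω → ℝ := fun l ω => (X (k+1) ω - X k ω) ^ (2*l) with hphid
    set a : ℕ → ℝ := fun l => t^(2*l) / ((2*l).factorial : ℝ) with hadef
    set c : ℝ := (Real.cosh (t*d) - ∑ l ∈ Finset.range M, (t*d)^(2*l)
        / ((2*l).factorial : ℝ)) / d^(2*M) with hcdef
    have hc0 : 0 ≤ c := div_nonneg hcoshd (by positivity)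
    have ha0 : ∀ l, 0 ≤ a l := fun l => div_nonneg ((even_two_mul l).pow_nonneg t) (by positivity)
    have hint_pow : ∀ l, Integrable (φ l) μ := by
      intro l
      apply hIb _ (hξSM.pow _).aestronglyMeasurable (d^(2*l))
      filter_upwards [hbd] with ω h
      calc |(X (k+1) ω - X k ω) ^ (2*l)| = |X (k+1) ω - X k ω| ^ (2*l) := abs_pow _ _
        _ ≤ d^(2*l) := pow_le_pow_left₀ (abs_nonneg _) h _
    have hG_int : Integrable (∑ l ∈ Finset.range M, a l • φ l + c • φ M) μ :=
      (integrable_finset_sum' _ fun l _ => (hint_pow l).smul (a l)).add ((hint_pow M).smul c)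
    have hGbd : ∀ᵐ ω ∂μ, Real.cosh (t * (X (k+1) ω - X k ω))
        ≤ (∑ l ∈ Finset.range M, a l • φ l + c • φ M) ω := by
      filter_upwards [hbd] with ω h
      have hcb := cosh_pointwise_bound (t := t) hd h M
      simp only [Pi.add_apply, Finset.sum_apply, Pi.smul_apply, smul_eq_mul, hphid, hadef, hcdef]
      have hsum_eq : ∑ l ∈ Finset.range M,
          t^(2*l) / ((2*l).factorial : ℝ) * (X (k+1) ω - X k ω) ^ (2*l)
          = ∑ l ∈ Finset.range M, (t*(X (k+1) ω - X k ω))^(2*l)/((2*l).factorial : ℝ) := by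
        refine Finset.sum_congr rfl fun l _ => ?_
        rw [mul_pow]; ring
      rw [hsum_eq]
      refine hcb.trans (le_of_eq ?_)
      ring
    have hphi0 : μ[φ 0|F k] = fun _ => (1:ℝ) := by
      have : φ 0 = fun _ => (1:ℝ) := funext fun ω => pow_zero _
      rw [this, condExp_const (F.le k)]
    have hsplit : μ[∑ l ∈ Finset.range M, a l • φ l + c • φ M | F k]
        =ᵐ[μ] fun ω => (∑ l ∈ Finset.range M, a l * (μ[φ l|F k]) ω) + c * (μ[φ M|F k]) ω := by
      have hadd := condExp_add (m := F k) (f := ∑ l ∈ Finset.range M, a l • φ l)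
        (g := c • φ M)
        (integrable_finset_sum' (Finset.range M) fun l _ => (hint_pow l).smul (a l))
        ((hint_pow M).smul c)
      have hsum := condExp_finset_sum (m := F k) (s := Finset.range M)
        (f := fun l => a l • φ l) (fun l _ => (hint_pow l).smul (a l))
      have hsm : ∀ l : ℕ, μ[a l • φ l|F k] =ᵐ[μ] a l • μ[φ l|F k] :=
        fun l => condExp_smul (a l) (φ l) (F k)
      have hall : ∀ᵐ ω ∂μ, ∀ l : ℕ, (μ[a l • φ l|F k]) ω = (a l • μ[φ l|F k]) ω :=
        ae_all_iff.2 hsm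
      have hsmM := condExp_smul (μ := μ) (m := F k) c (φ M)
      filter_upwards [hadd, hsum, hall, hsmM] with ω e1 e2 e3 e4
      rw [e1]
      simp only [Pi.add_apply]
      rw [e2, e4]
      simp only [Finset.sum_apply, Pi.smul_apply, smul_eq_mul]
      congr 1
      exact Finset.sum_congr rfl fun l _ => by rw [e3 l]; simp
    have hmom' : ∀ᵐ ω ∂μ, ∀ l : ℕ, 1 ≤ l → l ≤ M → (μ[φ l|F k]) ω ≤ μmom (2*l) := by
      rw [ae_all_iff]
      intro l
      by_cases h1 : 1 ≤ l ∧ l ≤ M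
      · have h2 := hmom (k+1) (by omega) l h1.1 h1.2
        simp only [Nat.add_sub_cancel] at h2
        filter_upwards [h2] with ω hω
        intro _ _; exact hω
      · filter_upwards with ω h2 h3; exact absurd ⟨h2, h3⟩ h1
    have h5 := condExp_mono (m := F k) hint_cosh hG_int hGbd
    refine hcosh_eq.symm.le.trans (h5.trans ?_)
    filter_upwards [hsplit, hmom'] with ω esp emom
    rw [esp]
    rw [range_eq_insert_Icc hM, Finset.sum_insert (by simp)]
    have h00 : a 0 * (μ[φ 0|F k]) ω = 1 := by
      rw [hphi0]; simp [hadef]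
    rw [h00, hBdef]
    have hsb : ∑ l ∈ Finset.Icc 1 (M-1), a l * (μ[φ l|F k]) ω
        ≤ ∑ l ∈ Finset.Icc 1 (M-1), μmom (2*l) * t^(2*l) / ((2*l).factorial : ℝ) := by
      refine Finset.sum_le_sum fun l hl => ?_
      rw [Finset.mem_Icc] at hl
      have h6 : (μ[φ l|F k]) ω ≤ μmom (2*l) := emom l hl.1 (by omega)
      calc a l * (μ[φ l|F k]) ω ≤ a l * μmom (2*l) :=
            mul_le_mul_of_nonneg_left h6 (ha0 l)
        _ = μmom (2*l) * t^(2*l) / ((2*l).factorial : ℝ) := by rw [hadef]; ring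
    have hcb2 : c * (μ[φ M|F k]) ω ≤ (Real.cosh (t*d) - ∑ l ∈ Finset.range M,
        (t*d)^(2*l) / ((2*l).factorial : ℝ)) * (μmom (2*M) / d^(2*M)) := by
      calc c * (μ[φ M|F k]) ω ≤ c * μmom (2*M) :=
            mul_le_mul_of_nonneg_left (emom M hM le_rfl) hc0
        _ = _ := by rw [hcdef]; ring
    linarith
  have hintexp : ∀ k : ℕ, Integrable (fun ω => Real.exp (t*(X (k+1) ω - X k ω))) μ := by
    intro k
    apply hIb _ (Real.continuous_exp.comp_stronglyMeasurable
      (((hXm (k+1)).sub (hXm k)).const_mul t)).aestronglyMeasurable (Real.exp (t*d))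
    filter_upwards [hbdd' k] with ω h
    rw [abs_of_pos (Real.exp_pos _)]
    apply Real.exp_le_exp.2
    calc t*(X (k+1) ω - X k ω) ≤ t * |X (k+1) ω - X k ω| :=
          mul_le_mul_of_nonneg_left (le_abs_self _) ht
      _ ≤ t * d := mul_le_mul_of_nonneg_left h ht
  set Z : ℕ → Ω → ℝ := fun k ω => Real.exp (t * (X k ω - X 0 ω)) with hZdef
  have hZSM : ∀ k, StronglyMeasurable[F k] (Z k) := fun k =>
    Real.continuous_exp.comp_stronglyMeasurable
      (((hmart.stronglyAdapted k).sub ((hmart.stronglyAdapted 0).mono (F.mono (Nat.zero_le k)))).const_mul t)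
  have hZpos : ∀ k ω, 0 < Z k ω := fun k ω => Real.exp_pos _
  have hXbdd : ∀ k : ℕ, ∀ᵐ ω ∂μ, |X k ω - X 0 ω| ≤ k * d := by
    intro k
    induction k with
    | zero => filter_upwards with ω; simp
    | succ k ih =>
      filter_upwards [ih, hbdd' k] with ω h1 h2
      have he : X (k+1) ω - X 0 ω = (X k ω - X 0 ω) + (X (k+1) ω - X k ω) := by ring
      rw [he]
      calc |(X k ω - X 0 ω) + (X (k+1) ω - X k ω)|
          ≤ |X k ω - X 0 ω| + |X (k+1) ω - X k ω| := abs_add_le _ _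
        _ ≤ k*d + d := add_le_add h1 h2
        _ = ((k+1 : ℕ) : ℝ)*d := by push_cast; ring
  have hZint : ∀ k, Integrable (Z k) μ := by
    intro k
    apply hIb _ ((hZSM k).mono (F.le k)).aestronglyMeasurable (Real.exp (t*(k*d)))
    filter_upwards [hXbdd k] with ω h
    rw [hZdef, abs_of_pos (Real.exp_pos _)]
    apply Real.exp_le_exp.2
    calc t * (X k ω - X 0 ω) ≤ t * |X k ω - X 0 ω| :=
          mul_le_mul_of_nonneg_left (le_abs_self _) ht
      _ ≤ t * (k*d) := mul_le_mul_of_nonneg_left h ht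
  have hZmul : ∀ k : ℕ, Z (k+1) = Z k * fun ω => Real.exp (t * (X (k+1) ω - X k ω)) := by
    intro k
    funext ω
    simp only [hZdef, Pi.mul_apply]
    rw [← Real.exp_add]
    congr 1
    ring
  have hpull : ∀ k : ℕ, μ[Z (k+1)|F k] =ᵐ[μ]
      Z k * μ[fun ω => Real.exp (t*(X (k+1) ω - X k ω))|F k] := by
    intro k
    rw [hZmul k]
    exact condExp_stronglyMeasurable_mul_of_bound (F.le k) (hZSM k) (hintexp k)
      (Real.exp (t*(k*d))) (by
        filter_upwards [hXbdd k] with ω h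
        rw [Real.norm_eq_abs, hZdef, abs_of_pos (Real.exp_pos _)]
        apply Real.exp_le_exp.2
        calc t * (X k ω - X 0 ω) ≤ t * |X k ω - X 0 ω| :=
              mul_le_mul_of_nonneg_left (le_abs_self _) ht
          _ ≤ t * (k*d) := mul_le_mul_of_nonneg_left h ht)
  have hsubm : Submartingale Z F μ := by
    refine submartingale_nat (fun k => hZSM k) hZint fun k => ?_
    filter_upwards [hpull k, (hkey k).2] with ω e1 e2
    rw [e1, Pi.mul_apply]
    calc Z k ω = Z k ω * 1 := (mul_one _).symm
      _ ≤ Z k ω * (μ[fun ω => Real.exp (t*(X (k+1) ω - X k ω))|F k]) ω :=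
          mul_le_mul_of_nonneg_left e2 (hZpos k ω).le
  have hZB : ∀ k : ℕ, ∫ ω, Z k ω ∂μ ≤ B ^ k := by
    intro k
    induction k with
    | zero =>
      simp only [hZdef, sub_self, mul_zero, Real.exp_zero, pow_zero]
      simp
    | succ k ih =>
      have h1 : ∫ ω, Z (k+1) ω ∂μ = ∫ ω, (μ[Z (k+1)|F k]) ω ∂μ :=
        (integral_condExp (F.le k)).symm
      rw [h1]
      have h2 : μ[Z (k+1)|F k] ≤ᵐ[μ] fun ω => Z k ω * B := by
        filter_upwards [hpull k, (hkey k).1] with ω e1 e2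
        rw [e1, Pi.mul_apply]
        exact mul_le_mul_of_nonneg_left e2 (hZpos k ω).le
      calc ∫ ω, (μ[Z (k+1)|F k]) ω ∂μ ≤ ∫ ω, Z k ω * B ∂μ :=
            integral_mono_ae integrable_condExp ((hZint k).mul_const B) h2
        _ = (∫ ω, Z k ω ∂μ) * B := integral_mul_const _ _
        _ ≤ B^k * B := mul_le_mul_of_nonneg_right ih (le_trans zero_le_one hB1)
        _ = B^(k+1) := (pow_succ B k).symm
  set ε : ℝ≥0 := (Real.exp (t*α*n)).toNNReal with hεdef
  have hεcoe : (ε : ℝ) = Real.exp (t*α*n) := Real.coe_toNNReal _ (Real.exp_pos _).le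
  have hmax := maximal_ineq hsubm (fun k ω => (hZpos k ω).le) (ε := ε) n
  have hsubset : {ω | ∃ k, 1 ≤ k ∧ k ≤ n ∧ α * n ≤ X k ω - X 0 ω} ⊆
      {ω | (ε : ℝ) ≤ (Finset.range (n+1)).sup' Finset.nonempty_range_add_one fun k => Z k ω} := by
    rintro ω ⟨k, hk1, hkn, hge⟩
    have h1 : (ε : ℝ) ≤ Z k ω := by
      rw [hεcoe, hZdef]
      apply Real.exp_le_exp.2
      calc t*α*n = t*(α*n) := by ring
        _ ≤ t*(X k ω - X 0 ω) := mul_le_mul_of_nonneg_left hge ht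
    exact h1.trans (Finset.le_sup' (fun k => Z k ω) (Finset.mem_range.2 (by omega)))
  have hIS : ∫ ω in {ω | (ε : ℝ) ≤ (Finset.range (n+1)).sup' Finset.nonempty_range_add_one
      (fun k => Z k ω)}, Z n ω ∂μ ≤ ∫ ω, Z n ω ∂μ :=
    setIntegral_le_integral (hZint n) (Filter.Eventually.of_forall fun ω => (hZpos n ω).le)
  have hmax2 : (ε : ℝ≥0∞) * μ {ω | (ε : ℝ) ≤ (Finset.range (n+1)).sup'
      Finset.nonempty_range_add_one fun k => Z k ω} ≤ ENNReal.ofReal (B^n) := by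
    refine le_trans ?_ (ENNReal.ofReal_le_ofReal (hIS.trans (hZB n)))
    refine le_trans (le_of_eq ?_) hmax
    rfl
  have hεne : (ε : ℝ≥0∞) ≠ 0 := by
    simp only [ne_eq, ENNReal.coe_eq_zero]
    exact ne_of_gt (Real.toNNReal_pos.2 (Real.exp_pos _))
  have hfin : μ {ω | (ε : ℝ) ≤ (Finset.range (n+1)).sup' Finset.nonempty_range_add_one
      fun k => Z k ω} ≤ ENNReal.ofReal (B^n) / (ε : ℝ≥0∞) := by
    rw [ENNReal.le_div_iff_mul_le (Or.inl hεne) (Or.inl ENNReal.coe_ne_top), mul_comm]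
    exact hmax2
  refine le_trans (measure_mono hsubset) (hfin.trans (le_of_eq ?_))
  have hεofReal : (ε : ℝ≥0∞) = ENNReal.ofReal (Real.exp (t*α*n)) := rfl
  rw [hεofReal, ← ENNReal.ofReal_div_of_pos (Real.exp_pos _)]
  congr 1
  rw [div_eq_iff (Real.exp_ne_zero _), mul_pow, ← Real.exp_nat_mul, mul_right_comm,
    ← Real.exp_add, show (n:ℝ)*(-(t*α)) + t*α*n = 0 by ring, Real.exp_zero, one_mul]

lemma bracket_eq {d x : ℝ} (hd : d ≠ 0) {M : ℕ} (hM : 1 ≤ M) (A : ℕ → ℝ) (γ : ℝ) :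
    1 + (∑ l ∈ Finset.Icc 1 (M-1), A l * (x/d)^(2*l) / ((2*l).factorial:ℝ))
      + (Real.cosh ((x/d)*d) - ∑ l ∈ Finset.range M, ((x/d)*d)^(2*l)/((2*l).factorial:ℝ)) * γ
    = 1 + (∑ l ∈ Finset.Icc 1 (M-1), (A l / d^(2*l) - γ) * x^(2*l) / ((2*l).factorial:ℝ))
      + γ * (Real.cosh x - 1) := by
  rw [div_mul_cancel₀ x hd]
  have h1 : ∑ l ∈ Finset.Icc 1 (M-1), A l * (x/d)^(2*l) / ((2*l).factorial:ℝ)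
      = ∑ l ∈ Finset.Icc 1 (M-1), (A l / d^(2*l)) * x^(2*l) / ((2*l).factorial:ℝ) := by
    refine Finset.sum_congr rfl fun l _ => ?_
    rw [div_pow]; ring
  have h2 : ∑ l ∈ Finset.range M, x^(2*l)/((2*l).factorial:ℝ)
      = 1 + ∑ l ∈ Finset.Icc 1 (M-1), x^(2*l)/((2*l).factorial:ℝ) := by
    rw [range_eq_insert_Icc hM, Finset.sum_insert (by simp)]
    norm_num
  have h3 : ∑ l ∈ Finset.Icc 1 (M-1), (A l / d^(2*l) - γ) * x^(2*l) / ((2*l).factorial:ℝ)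
      = (∑ l ∈ Finset.Icc 1 (M-1), (A l / d^(2*l)) * x^(2*l) / ((2*l).factorial:ℝ))
        - γ * ∑ l ∈ Finset.Icc 1 (M-1), x^(2*l)/((2*l).factorial:ℝ) := by
    rw [Finset.mul_sum, ← Finset.sum_sub_distrib]
    refine Finset.sum_congr rfl fun l _ => by ring
  rw [h1, h2, h3]; ring

/-- Theorem 3: exponential bound for conditionally symmetric martingales with bounded jumps,
taking into account conditional moments of even orders up to `m`. -/
theorem conditionally_symmetric_martingale_moment_bound
    {Ω : Type*} {m0 : MeasurableSpace Ω} {μ : Measure Ω} [IsProbabilityMeasure μ]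
    {F : Filtration ℕ m0} {X : ℕ → Ω → ℝ}
    (hmart : Martingale X F μ)
    (hsymm : ∀ k : ℕ, 1 ≤ k → ∀ g : ℝ → ℝ, Measurable g →
      μ[fun ω => g (X k ω - X (k - 1) ω) | F (k - 1)]
        =ᵐ[μ] μ[fun ω => g (-(X k ω - X (k - 1) ω)) | F (k - 1)])
    {m : ℕ} (hm_even : Even m) (hm_pos : 0 < m)
    {d : ℝ} (hd : 0 < d) {μmom : ℕ → ℝ}
    (hμnonneg : ∀ l, 1 ≤ l → l ≤ m / 2 → 0 ≤ μmom (2 * l))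
    (hbdd : ∀ k : ℕ, 1 ≤ k → ∀ᵐ ω ∂μ, |X k ω - X (k - 1) ω| ≤ d)
    (hmom : ∀ k : ℕ, 1 ≤ k → ∀ l, 1 ≤ l → l ≤ m / 2 → ∀ᵐ ω ∂μ,
      (μ[fun ω => (X k ω - X (k - 1) ω) ^ (2 * l) | F (k - 1)]) ω ≤ μmom (2 * l))
    {α : ℝ} (hα : 0 ≤ α) (n : ℕ) (hn : 1 ≤ n) :
    μ {ω | ∃ k, 1 ≤ k ∧ k ≤ n ∧ α * n ≤ |X k ω - X 0 ω|}
      ≤ ENNReal.ofReal (2 *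
          (sInf ((fun x : ℝ => Real.exp (-(α / d) * x) *
            (1 + (∑ l ∈ Finset.Icc 1 (m / 2 - 1),
                (μmom (2 * l) / d ^ (2 * l) - μmom m / d ^ m) * x ^ (2 * l)
                  / (Nat.factorial (2 * l)))
              + (μmom m / d ^ m) * (Real.cosh x - 1))) '' Set.Ici 0)) ^ n) := by
  obtain ⟨j, hj⟩ := hm_even
  have hM : 1 ≤ m / 2 := by omega
  set M := m / 2 with hMdef
  rw [show m = 2*M by omega]
  set G : ℝ → ℝ := fun x : ℝ => Real.exp (-(α / d) * x) *
            (1 + (∑ l ∈ Finset.Icc 1 (M - 1),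
                (μmom (2 * l) / d ^ (2 * l) - μmom (2*M) / d ^ (2*M)) * x ^ (2 * l)
                  / ((2 * l).factorial : ℝ))
              + (μmom (2*M) / d ^ (2*M)) * (Real.cosh x - 1)) with hGdef
  -- hypotheses for -X
  have hsymmN : ∀ k : ℕ, 1 ≤ k → ∀ g : ℝ → ℝ, Measurable g →
      μ[fun ω => g ((-X) k ω - (-X) (k - 1) ω) | F (k - 1)]
        =ᵐ[μ] μ[fun ω => g (-((-X) k ω - (-X) (k - 1) ω)) | F (k - 1)] := by
    intro k hk g hg
    have e1 : (fun ω => g ((-X) k ω - (-X) (k - 1) ω))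
        = fun ω => g (-(X k ω - X (k - 1) ω)) := by
      funext ω; congr 1; simp only [Pi.neg_apply]; ring
    have e2 : (fun ω => g (-((-X) k ω - (-X) (k - 1) ω)))
        = fun ω => g (X k ω - X (k - 1) ω) := by
      funext ω; congr 1; simp only [Pi.neg_apply]; ring
    rw [e1, e2]
    exact (hsymm k hk g hg).symm
  have hbddN : ∀ k : ℕ, 1 ≤ k → ∀ᵐ ω ∂μ, |(-X) k ω - (-X) (k - 1) ω| ≤ d := by
    intro k hk
    filter_upwards [hbdd k hk] with ω h
    simp only [Pi.neg_apply]
    rwa [show -X k ω - -X (k-1) ω = -(X k ω - X (k-1) ω) by ring, abs_neg]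
  have hmomN : ∀ k : ℕ, 1 ≤ k → ∀ l, 1 ≤ l → l ≤ M → ∀ᵐ ω ∂μ,
      (μ[fun ω => ((-X) k ω - (-X) (k - 1) ω) ^ (2 * l) | F (k - 1)]) ω ≤ μmom (2 * l) := by
    intro k hk l hl1 hl2
    have e : (fun ω => ((-X) k ω - (-X) (k - 1) ω) ^ (2 * l))
        = fun ω => (X k ω - X (k - 1) ω) ^ (2 * l) := by
      funext ω
      simp only [Pi.neg_apply]
      rw [show -X k ω - -X (k-1) ω = -(X k ω - X (k-1) ω) by ring,
        (even_two_mul l).neg_pow]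
    rw [e]
    exact hmom k hk l hl1 hl2
  -- rewriting the base of the bound
  have hbase : ∀ x : ℝ, Real.exp (-(x/d*α)) *
      (1 + (∑ l ∈ Finset.Icc 1 (M-1), μmom (2*l) * (x/d)^(2*l) / ((2*l).factorial : ℝ))
        + (Real.cosh ((x/d)*d) - ∑ l ∈ Finset.range M, ((x/d)*d)^(2*l)
            / ((2*l).factorial : ℝ)) * (μmom (2*M) / d^(2*M))) = G x := by
    intro x
    simp only [hGdef]
    rw [bracket_eq hd.ne' hM (fun l => μmom (2*l)) (μmom (2*M) / d^(2*M)),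
      show -(x/d*α) = -(α/d)*x by ring]
  have hGpos : ∀ x : ℝ, 0 ≤ G x := by
    intro x
    rw [← hbase x]
    have hc := cosh_partial_le ((x/d)*d) M
    have hs : 0 ≤ ∑ l ∈ Finset.Icc 1 (M-1), μmom (2*l) * (x/d)^(2*l)
        / ((2*l).factorial : ℝ) := by
      apply Finset.sum_nonneg
      intro l hl
      rw [Finset.mem_Icc] at hl
      have h6 := hμnonneg l hl.1 (by omega)
      have h7 := (even_two_mul l).pow_nonneg (x/d)
      positivity
    have h8 : 0 ≤ μmom (2*M) / d^(2*M) := div_nonneg (hμnonneg M hM le_rfl) (by positivity)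
    have h9 : 0 ≤ Real.exp (-(x/d*α)) := (Real.exp_pos _).le
    nlinarith [mul_nonneg (sub_nonneg.2 hc) h8]
  -- main pointwise-in-x bound
  have hmain : ∀ x : ℝ, 0 ≤ x → μ {ω | ∃ k, 1 ≤ k ∧ k ≤ n ∧ α * n ≤ |X k ω - X 0 ω|}
      ≤ ENNReal.ofReal (2 * G x ^ n) := by
    intro x hx
    have ht : (0:ℝ) ≤ x / d := div_nonneg hx hd.le
    have h1 := onesided hmart hsymm hM hd hμnonneg hbdd hmom hα n ht
    have h2 := onesided hmart.neg hsymmN hM hd hμnonneg hbddN hmomN hα n ht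
    rw [hbase x] at h1 h2
    have hsub : {ω | ∃ k, 1 ≤ k ∧ k ≤ n ∧ α * n ≤ |X k ω - X 0 ω|} ⊆
        {ω | ∃ k, 1 ≤ k ∧ k ≤ n ∧ α * n ≤ X k ω - X 0 ω} ∪
        {ω | ∃ k, 1 ≤ k ∧ k ≤ n ∧ α * n ≤ (-X) k ω - (-X) 0 ω} := by
      rintro ω ⟨k, hk1, hk2, hk3⟩
      rcases le_abs.1 hk3 with h | h
      · exact Or.inl ⟨k, hk1, hk2, h⟩
      · refine Or.inr ⟨k, hk1, hk2, ?_⟩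
        simp only [Pi.neg_apply]
        linarith
    calc μ {ω | ∃ k, 1 ≤ k ∧ k ≤ n ∧ α * n ≤ |X k ω - X 0 ω|}
        ≤ μ ({ω | ∃ k, 1 ≤ k ∧ k ≤ n ∧ α * n ≤ X k ω - X 0 ω} ∪
            {ω | ∃ k, 1 ≤ k ∧ k ≤ n ∧ α * n ≤ (-X) k ω - (-X) 0 ω}) := measure_mono hsub
      _ ≤ μ {ω | ∃ k, 1 ≤ k ∧ k ≤ n ∧ α * n ≤ X k ω - X 0 ω} +
          μ {ω | ∃ k, 1 ≤ k ∧ k ≤ n ∧ α * n ≤ (-X) k ω - (-X) 0 ω} := measure_union_le _ _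
      _ ≤ ENNReal.ofReal (G x ^ n) + ENNReal.ofReal (G x ^ n) := add_le_add h1 h2
      _ = ENNReal.ofReal (2 * G x ^ n) := by
          rw [← ENNReal.ofReal_add (pow_nonneg (hGpos x) n) (pow_nonneg (hGpos x) n)]
          congr 1; ring
  -- infimum argument
  set T : Set ℝ := G '' Set.Ici 0 with hTdef
  have hTne : T.Nonempty := ⟨G 0, 0, Set.self_mem_Ici, rfl⟩
  have hT0 : ∀ y ∈ T, (0:ℝ) ≤ y := by
    rintro y ⟨x, hx, rfl⟩
    exact hGpos x
  have hker : ∀ s : ℝ, sInf T < s →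
      μ {ω | ∃ k, 1 ≤ k ∧ k ≤ n ∧ α * n ≤ |X k ω - X 0 ω|} ≤ ENNReal.ofReal (2 * s ^ n) := by
    intro s hs
    obtain ⟨y, hyT, hys⟩ := exists_lt_of_csInf_lt hTne hs
    obtain ⟨x, hx, rfl⟩ := hyT
    refine (hmain x hx).trans (ENNReal.ofReal_le_ofReal ?_)
    have h1 : G x ^ n ≤ s ^ n := pow_le_pow_left₀ (hGpos x) hys.le n
    linarith
  have htend : Tendsto (fun s : ℝ => ENNReal.ofReal (2 * s ^ n))
      (nhdsWithin (sInf T) (Set.Ioi (sInf T)))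
      (nhds (ENNReal.ofReal (2 * sInf T ^ n))) :=
    ((ENNReal.continuous_ofReal.comp
      (continuous_const.mul (continuous_pow n))).tendsto (sInf T)).mono_left
      nhdsWithin_le_nhds
  refine ge_of_tendsto htend ?_
  filter_upwards [self_mem_nhdsWithin] with s hs
  exact hker s hs
end
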